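/- The closure ordinal is countable: for every monotone F : Set ℕ → Set ℕ there exists a countable ordinal α (i.e. an ordinal α with cardinality at most ℵ₀, equivalently α < ω₁) such that F^α(∅) = lfp F; consequently the least ordinal α with F^α(∅) = lfp F is countable. -/

import Mathlib

open Ordinal

/-- Ordinal-indexed approximants of `F`: `F^0(∅) = ∅`, `F^(α+1)(∅) = F (F^α(∅))`, and
`F^λ(∅) = ⋃_{β < λ} F^β(∅)` for limit `λ`. -/
noncomputable def approx (F : Set ℕ → Set ℕ) (α : Ordinal) : Set ℕ :=
  Ordinal.limitRecOn α ∅ (fun _ ih => F ih) (fun β _ ih => ⋃ γ : {γ : Ordinal // γ < β}, ih γ.1 γ.2)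

/-- The least fixed point of `F` in the complete lattice `Set ℕ`. -/
def lfpSet (F : Set ℕ → Set ℕ) : Set ℕ := ⋂₀ {A : Set ℕ | F A ⊆ A}

lemma approx_zero (F : Set ℕ → Set ℕ) : approx F 0 = ∅ :=
  Ordinal.limitRecOn_zero _ _ _

lemma approx_succ (F : Set ℕ → Set ℕ) (α : Ordinal) :
    approx F (Order.succ α) = F (approx F α) :=
  Ordinal.limitRecOn_succ _ _ _ _

lemma approx_limit (F : Set ℕ → Set ℕ) {α : Ordinal} (h : Order.IsSuccLimit α) :
    approx F α = ⋃ γ : {γ : Ordinal // γ < α}, approx F γ.1 :=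
  Ordinal.limitRecOn_limit _ _ _ _ h

lemma approx_subset_succ (F : Set ℕ → Set ℕ)
    (hF : ∀ A B : Set ℕ, A ⊆ B → F A ⊆ F B) (α : Ordinal) :
    approx F α ⊆ approx F (Order.succ α) := by
  induction α using Ordinal.induction with
  | h α IH =>
    rcases Ordinal.zero_or_succ_or_isSuccLimit α with rfl | ⟨β, rfl⟩ | hlim
    · rw [approx_zero]; exact Set.empty_subset _
    · rw [approx_succ, approx_succ]
      exact hF _ _ (IH β (Order.lt_succ β))
    · rw [approx_limit F hlim, approx_succ, approx_limit F hlim]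
      refine Set.iUnion_subset fun γ => ?_
      refine (IH γ.1 γ.2).trans ?_
      rw [approx_succ]
      exact hF _ _ (Set.subset_iUnion (fun γ : {γ : Ordinal // γ < α} => approx F γ.1) γ)

lemma approx_mono (F : Set ℕ → Set ℕ)
    (hF : ∀ A B : Set ℕ, A ⊆ B → F A ⊆ F B) {β α : Ordinal} (h : β ≤ α) :
    approx F β ⊆ approx F α := by
  induction α using Ordinal.induction with
  | h α IH =>
    rcases eq_or_lt_of_le h with rfl | hlt
    · exact subset_rfl
    rcases Ordinal.zero_or_succ_or_isSuccLimit α with rfl | ⟨γ, rfl⟩ | hlim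
    · exact absurd hlt (not_lt_zero (a := β))
    · exact (IH γ (Order.lt_succ γ) (Order.lt_succ_iff.mp hlt)).trans
        (approx_subset_succ F hF γ)
    · rw [approx_limit F hlim]
      exact Set.subset_iUnion (fun γ : {γ : Ordinal // γ < α} => approx F γ.1) ⟨β, hlt⟩

lemma F_lfp_subset (F : Set ℕ → Set ℕ)
    (hF : ∀ A B : Set ℕ, A ⊆ B → F A ⊆ F B) : F (lfpSet F) ⊆ lfpSet F := by
  intro n hn
  refine Set.mem_sInter.mpr fun A hA => ?_
  have h1 : lfpSet F ⊆ A := Set.sInter_subset_of_mem hA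
  exact hA ((hF _ _ h1) hn)

lemma approx_subset_lfp (F : Set ℕ → Set ℕ)
    (hF : ∀ A B : Set ℕ, A ⊆ B → F A ⊆ F B) (α : Ordinal) :
    approx F α ⊆ lfpSet F := by
  induction α using Ordinal.induction with
  | h α IH =>
    rcases Ordinal.zero_or_succ_or_isSuccLimit α with rfl | ⟨β, rfl⟩ | hlim
    · rw [approx_zero]; exact Set.empty_subset _
    · rw [approx_succ]
      exact (hF _ _ (IH β (Order.lt_succ β))).trans (F_lfp_subset F hF)
    · rw [approx_limit F hlim]
      exact Set.iUnion_subset fun γ => IH γ.1 γ.2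

universe u in
lemma exists_stab (F : Set ℕ → Set ℕ)
    (hF : ∀ A B : Set ℕ, A ⊆ B → F A ⊆ F B) :
    ∃ α : Ordinal.{u}, α.card ≤ Cardinal.aleph0 ∧ approx F α = approx F (Order.succ α) := by
  by_contra hcon
  push_neg at hcon
  set Λ : Ordinal.{u} := (Cardinal.aleph 1).ord with hΛ
  have hssub : ∀ α : Set.Iio Λ, ∃ n : ℕ,
      n ∈ approx F (Order.succ α.1) ∧ n ∉ approx F α.1 := by
    rintro ⟨α, hα⟩
    have hcard : α.card ≤ Cardinal.aleph0 := by
      have h1 := (Cardinal.lt_ord.mp hα)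
      rw [← Cardinal.succ_aleph0] at h1
      exact Order.lt_succ_iff.mp h1
    have hne := hcon α hcard
    have hsub := approx_subset_succ F hF α
    rcases Set.exists_of_ssubset (ssubset_of_subset_of_ne hsub hne) with ⟨n, hn1, hn2⟩
    exact ⟨n, hn1, hn2⟩
  choose g hg1 hg2 using hssub
  have haux : ∀ a b : Set.Iio Λ, a.1 < b.1 → g a ≠ g b := by
    intro a b hlt hab
    have : g a ∈ approx F b.1 :=
      approx_mono F hF (Order.succ_le_of_lt hlt) (hg1 a)
    rw [hab] at this
    exact hg2 b this
  have hinj : Function.Injective g := by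
    intro a b hab
    rcases lt_trichotomy a.1 b.1 with h | h | h
    · exact absurd hab (haux a b h)
    · exact Subtype.ext h
    · exact absurd hab.symm (haux b a h)
  have hinj' : Function.Injective (fun a => (ULift.up.{u + 1, 0} (g a))) :=
    fun a b h => hinj (ULift.up_injective h)
  have hle : Cardinal.mk.{u + 1} (Set.Iio Λ) ≤ Cardinal.mk.{u + 1} (ULift.{u + 1, 0} ℕ) :=
    Cardinal.mk_le_of_injective hinj'
  rw [Ordinal.mk_Iio_ordinal, Cardinal.card_ord, Cardinal.mk_uLift, Cardinal.mk_nat,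
    Cardinal.lift_aleph0] at hle
  have h3 : (Cardinal.aleph0.{u + 1}) < Cardinal.lift.{u + 1, u} (Cardinal.aleph 1) := by
    rw [← Cardinal.lift_aleph0.{u + 1, u}]
    exact Cardinal.lift_lt.mpr Cardinal.aleph0_lt_aleph_one
  exact absurd hle (not_le.mpr h3)

universe u in
lemma closure_ordinal_countable_aux (F : Set ℕ → Set ℕ)
    (hF : ∀ A B : Set ℕ, A ⊆ B → F A ⊆ F B) :
    (∃ α : Ordinal.{u}, α.card ≤ Cardinal.aleph0 ∧ approx F α = lfpSet F) ∧
    (sInf {α : Ordinal.{u} | approx F α = lfpSet F}).card ≤ Cardinal.aleph0 := by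
  have key := exists_stab.{u} F hF
  obtain ⟨α, hα, hfix⟩ := key
  have hfp : F (approx F α) = approx F α := by
    rw [← approx_succ F α]; exact hfix.symm
  have heq : approx F α = lfpSet F := by
    refine subset_antisymm (approx_subset_lfp F hF α) ?_
    exact Set.sInter_subset_of_mem (by rw [Set.mem_setOf_eq, hfp])
  refine ⟨⟨α, hα, heq⟩, ?_⟩
  have hmem : α ∈ {α : Ordinal.{u} | approx F α = lfpSet F} := heq
  have h4 : sInf {α : Ordinal.{u} | approx F α = lfpSet F} ≤ α := csInf_le' hmem
  exact le_trans (Ordinal.card_le_card h4) hα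

/-- The closure ordinal is countable: there is a countable ordinal `α` with
`F^α(∅) = lfp F`, and consequently the least such ordinal is countable. -/
theorem closure_ordinal_countable (F : Set ℕ → Set ℕ)
    (hF : ∀ A B : Set ℕ, A ⊆ B → F A ⊆ F B) :
    (∃ α : Ordinal, α.card ≤ Cardinal.aleph0 ∧ approx F α = lfpSet F) ∧
    (sInf {α : Ordinal | approx F α = lfpSet F}).card ≤ Cardinal.aleph0 :=
  ⟨(closure_ordinal_countable_aux F hF).1, (closure_ordinal_countable_aux F hF).2⟩
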